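/- Let F be a field and V a finite-dimensional F-vector space, and let D be an F[X]-linear endomorphism of V[X] := PolynomialModule F V with D ∘ D = 0. Define d₀ : V → V by d₀(x) := the degree-0 coefficient of D(ι x), where ι : V → V[X] is the inclusion as constant polynomials. Then d₀ ∘ d₀ = 0, and dim_F (ker d₀ / im d₀) ≥ rank_{F[X]} (ker D / im D), where the rank of a finitely generated F[X]-module H is dim_{F(X)} (F(X) ⊗_{F[X]} H). -/

import Mathlib

open Polynomial PolynomialModule TensorProduct

/-- The homology `ker f ⧸ im f` of a linear endomorphism `f` (with `f ∘ f = 0` in the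
intended applications). -/
noncomputable def LinHomology {R : Type*} [CommRing R] {N : Type*} [AddCommGroup N]
    [Module R N] (f : N →ₗ[R] N) : Type _ :=
  ↥(LinearMap.ker f) ⧸ (LinearMap.range f).comap (LinearMap.ker f).subtype

noncomputable instance {R : Type*} [CommRing R] {N : Type*} [AddCommGroup N]
    [Module R N] (f : N →ₗ[R] N) : AddCommGroup (LinHomology f) :=
  inferInstanceAs (AddCommGroup (↥(LinearMap.ker f) ⧸
    (LinearMap.range f).comap (LinearMap.ker f).subtype))

noncomputable instance {R : Type*} [CommRing R] {N : Type*} [AddCommGroup N]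
    [Module R N] (f : N →ₗ[R] N) : Module R (LinHomology f) :=
  inferInstanceAs (Module R (↥(LinearMap.ker f) ⧸
    (LinearMap.range f).comap (LinearMap.ker f).subtype))

/-- The map `d₀ : V → V`, `x ↦` the degree-`0` coefficient of `D (ι x)`, as an
`F`-linear map. -/
noncomputable def dZero (F : Type*) [Field F] (V : Type*) [AddCommGroup V] [Module F V]
    (D : PolynomialModule F V →ₗ[Polynomial F] PolynomialModule F V) : V →ₗ[F] V where
  toFun x := (D (PolynomialModule.lsingle F 0 x)).coeff 0
  map_add' x y := by simp [map_add, PolynomialModule.coeff_add]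
  map_smul' c x := by
    have h1 : PolynomialModule.lsingle F 0 (c • x) =
        c • PolynomialModule.lsingle F 0 x := map_smul _ _ _
    show (D (PolynomialModule.lsingle F 0 (c • x))).coeff 0 = c • (D (PolynomialModule.lsingle F 0 x)).coeff 0
    rw [h1, LinearMap.map_smul_of_tower]
    rfl

section Aux

variable (F : Type*) [Field F] (V : Type*) [AddCommGroup V] [Module F V]

/-- The constant-coefficient map as an `F`-linear map. -/
noncomputable def pi0 : PolynomialModule F V →ₗ[F] V where
  toFun p := p.coeff 0
  map_add' p q := rfl
  map_smul' c p := rfl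

variable {F V}

lemma pi0_smul (f : Polynomial F) (p : PolynomialModule F V) :
    pi0 F V (f • p) = f.coeff 0 • pi0 F V p := by
  show (f • p).coeff 0 = f.coeff 0 • p.coeff 0
  rw [PolynomialModule.smul_apply]
  simp

lemma pi0_single_zero (x : V) : pi0 F V (PolynomialModule.single F 0 x) = x := by
  show (PolynomialModule.single F 0 x).coeff 0 = x
  simp

lemma pi0_lsingle_zero (x : V) : pi0 F V (PolynomialModule.lsingle F 0 x) = x :=
  pi0_single_zero x

/-- A basis of `V` over `F` gives a basis of `V[X]` over `F[X]`. -/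
noncomputable def polyBasis {ι : Type*} [Fintype ι] (b : Module.Basis ι F V) :
    Module.Basis ι (Polynomial F) (PolynomialModule F V) := by
  refine Module.Basis.mk (v := fun i => PolynomialModule.lsingle F 0 (b i)) ?_ ?_
  · rw [linearIndependent_iff]
    intro l hl
    ext i m
    have h1 : ∀ k : ℕ, (Finsupp.linearCombination (Polynomial F)
        (fun i => PolynomialModule.lsingle F 0 (b i)) l).coeff k = 0 := by
      intro k; rw [hl]; rfl
    have h2 : ∑ j, (l j).coeff m • b j = 0 := by
      have h3 := h1 m
      rw [Finsupp.linearCombination_apply] at h3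
      rw [Finsupp.sum_fintype] at h3
      swap
      · intro j; exact zero_smul _ _
      have h5 : ((∑ i, l i • PolynomialModule.lsingle F 0 (b i) :
          PolynomialModule F V)).coeff m = ∑ i, ((l i • PolynomialModule.lsingle F 0 (b i) :
          PolynomialModule F V)).coeff m := by
          rw [PolynomialModule.coeff_sum, Finsupp.finset_sum_apply]
      have h6 : ∀ j, ((l j • PolynomialModule.lsingle F 0 (b j) :
          PolynomialModule F V)).coeff m = (l j).coeff m • b j := by
        intro j
        show ((l j • PolynomialModule.single F 0 (b j) : PolynomialModule F V)).coeff m = _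
        rw [PolynomialModule.smul_single_apply]
        simp
      rw [h5] at h3
      rw [← h3]
      exact Finset.sum_congr rfl fun j _ => (h6 j).symm
    have h4 := linearIndependent_iff'.mp b.linearIndependent Finset.univ
      (fun j => (l j).coeff m) h2 i (Finset.mem_univ i)
    simpa using h4
  · rintro p -
    have h0 : ∀ x : V, PolynomialModule.single F 0 x ∈
        Submodule.span (Polynomial F) (Set.range fun i => PolynomialModule.lsingle F 0 (b i)) := by
      intro x
      have hx : x ∈ Submodule.span F (Set.range b) := by rw [b.span_eq]; trivial
      induction hx using Submodule.span_induction with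
      | mem y hy =>
        obtain ⟨i, rfl⟩ := hy
        exact Submodule.subset_span ⟨i, rfl⟩
      | zero => rw [PolynomialModule.single_zero]; exact Submodule.zero_mem _
      | add y z _ _ hy hz => rw [PolynomialModule.single_add]; exact Submodule.add_mem _ hy hz
      | smul c y _ hy =>
        rw [PolynomialModule.single_smul]
        exact Submodule.smul_of_tower_mem _ c hy
    induction p using PolynomialModule.induction_linear with
    | zero => exact Submodule.zero_mem _
    | add p q hp hq => exact Submodule.add_mem _ hp hq
    | single a x =>
      have : PolynomialModule.single F a x =
          Polynomial.monomial a (1 : F) • PolynomialModule.single F 0 x := by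
        rw [PolynomialModule.monomial_smul_single]; simp
      rw [this]
      exact Submodule.smul_mem _ _ (h0 x)

end Aux

section AbsAux

open TensorProduct

variable {R K M : Type*} [CommRing R] [Field K] [Algebra R K] [Module.Flat R K]
  [AddCommGroup M] [Module R M]

set_option maxHeartbeats 1000000 in
/-- Abstract key inequality: for `D : M →ₗ[R] M` with `D ∘ D = 0`, base changing to a field
`K` flat over `R`, the dimension of `K ⊗ (ker D ⧸ im D)` is at most
`dim (K ⊗ M) - 2 * dim (K ⊗ im D)`. -/
lemma LinHomology.finrank_baseChange_le [Module.Finite R M] (D : M →ₗ[R] M)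
    [Module.Finite R ↥(LinearMap.ker D)] [Module.Finite R ↥(LinearMap.range D)]
    (hDD : ∀ x, D (D x) = 0) :
    Module.finrank K (K ⊗[R] LinHomology D) +
      2 * Module.finrank K (K ⊗[R] ↥(LinearMap.range D)) ≤
      Module.finrank K (K ⊗[R] M) := by
  classical
  haveI : Module.Finite R (LinHomology D) :=
    inferInstanceAs (Module.Finite R (↥(LinearMap.ker D) ⧸
      (LinearMap.range D).comap (LinearMap.ker D).subtype))
  set N := LinearMap.range D with hN
  have hNker : N ≤ LinearMap.ker D := by
    rintro _ ⟨x, rfl⟩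
    exact hDD x
  set m := Module.finrank K (K ⊗[R] ↥N) with hm
  set n := Module.finrank K (K ⊗[R] M) with hn
  set DK := D.baseChange K with hDK
  set jN := (N.subtype).baseChange K with hjN
  set jker := ((LinearMap.ker D).subtype).baseChange K with hjker
  have hjN_inj : Function.Injective jN := by
    have h := Module.Flat.lTensor_preserves_injective_linearMap (M := K)
      N.subtype N.injective_subtype
    rw [hjN, show (⇑(N.subtype.baseChange K) : _ → _) = ⇑(N.subtype.lTensor K) from
      LinearMap.baseChange_eq_ltensor _]
    exact h
  have hjker_inj : Function.Injective jker := by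
    have h := Module.Flat.lTensor_preserves_injective_linearMap (M := K)
      (LinearMap.ker D).subtype (LinearMap.ker D).injective_subtype
    rw [hjker, show (⇑((LinearMap.ker D).subtype.baseChange K) : _ → _) =
      ⇑((LinearMap.ker D).subtype.lTensor K) from LinearMap.baseChange_eq_ltensor _]
    exact h
  -- range of jN is inside range of DK
  have hjN_range : LinearMap.range jN ≤ LinearMap.range DK := by
    rintro _ ⟨z, rfl⟩
    induction z using TensorProduct.induction_on with
    | zero => rw [map_zero]; exact Submodule.zero_mem _
    | tmul k y =>
      obtain ⟨y, hy⟩ := y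
      obtain ⟨x, rfl⟩ := hy
      refine ⟨k ⊗ₜ x, ?_⟩
      rw [hDK, hjN, LinearMap.baseChange_tmul, LinearMap.baseChange_tmul]
      rfl
    | add u v hu hv => rw [map_add]; exact Submodule.add_mem _ hu hv
  have h3 : m ≤ Module.finrank K ↥(LinearMap.range DK) := by
    have h := LinearMap.finrank_range_of_inj hjN_inj
    rw [← hm] at h
    rw [← h]
    exact Submodule.finrank_mono hjN_range
  -- range of jker is inside ker of DK
  have h2 : Module.finrank K (K ⊗[R] ↥(LinearMap.ker D)) +
      Module.finrank K ↥(LinearMap.range DK) ≤ n := by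
    have hker_le : LinearMap.range jker ≤ LinearMap.ker DK := by
      rintro _ ⟨z, rfl⟩
      rw [LinearMap.mem_ker]
      have hcomp : DK ∘ₗ jker = 0 := by
        rw [hDK, hjker, ← LinearMap.baseChange_comp]
        have h0 : D ∘ₗ (LinearMap.ker D).subtype = 0 := by
          ext ⟨x, hx⟩
          exact hx
        rw [h0]
        ext
        simp
      have := LinearMap.ext_iff.mp hcomp z
      simpa using this
    have e1 := LinearMap.finrank_range_of_inj hjker_inj
    have e2 : Module.finrank K ↥(LinearMap.range jker) ≤
        Module.finrank K ↥(LinearMap.ker DK) := Submodule.finrank_mono hker_le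
    have e3 := LinearMap.finrank_range_add_finrank_ker DK
    rw [← hn] at e3
    omega
  -- the quotient map and its base change
  set C := (LinearMap.range D).comap (LinearMap.ker D).subtype with hC
  let mkq : ↥(LinearMap.ker D) →ₗ[R] LinHomology D := C.mkQ
  set QK := mkq.baseChange K with hQK
  have hQK_surj : Function.Surjective ⇑QK := by
    rw [hQK, show (⇑(mkq.baseChange K) : _ → _) = ⇑(mkq.lTensor K) from
      LinearMap.baseChange_eq_ltensor _]
    exact LinearMap.lTensor_surjective K (Submodule.mkQ_surjective C)
  set U := LinearMap.range (C.subtype.baseChange K) with hU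
  have hUker : U ≤ LinearMap.ker QK := by
    rintro _ ⟨y, rfl⟩
    rw [LinearMap.mem_ker]
    have hcomp : QK ∘ₗ (C.subtype.baseChange K) = 0 := by
      rw [hQK, ← LinearMap.baseChange_comp]
      have hz : mkq ∘ₗ C.subtype = 0 := by
        ext z
        exact (Submodule.Quotient.mk_eq_zero C).mpr z.2
      rw [hz]
      ext
      simp
    have := LinearMap.ext_iff.mp hcomp y
    simpa using this
  let lift1 : ((K ⊗[R] ↥(LinearMap.ker D)) ⧸ U) →ₗ[K] (K ⊗[R] LinHomology D) :=
    Submodule.liftQ U QK hUker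
  have hlift1 : ∀ z, lift1 (Submodule.Quotient.mk z) = QK z := fun z =>
    Submodule.liftQ_apply U QK z
  have hsurjlift : Function.Surjective ⇑lift1 := by
    intro z
    obtain ⟨y, hy⟩ := hQK_surj z
    exact ⟨Submodule.Quotient.mk y, by rw [hlift1]; exact hy⟩
  have g1 : Module.finrank K (K ⊗[R] LinHomology D) ≤
      Module.finrank K ((K ⊗[R] ↥(LinearMap.ker D)) ⧸ U) :=
    Module.finrank_le_finrank_of_rank_le_rank
      (by simpa using lift1.rank_le_of_surjective hsurjlift)
      (Module.rank_lt_aleph0 _ _)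
  have g2 : Module.finrank K ((K ⊗[R] ↥(LinearMap.ker D)) ⧸ U) +
      Module.finrank K ↥U = Module.finrank K (K ⊗[R] ↥(LinearMap.ker D)) :=
    Submodule.finrank_quotient_add_finrank U
  have g3 : Module.finrank K ↥U = m := by
    rw [hU]
    have hcomp : (LinearMap.ker D).subtype ∘ₗ C.subtype =
        N.subtype ∘ₗ (Submodule.comapSubtypeEquivOfLe hNker).toLinearMap := by
      ext z
      rfl
    have hbc : jker ∘ₗ (C.subtype.baseChange K) =
        jN ∘ₗ (((Submodule.comapSubtypeEquivOfLe hNker).toLinearMap).baseChange K) := by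
      rw [hjker, hjN, ← LinearMap.baseChange_comp, ← LinearMap.baseChange_comp, hcomp]
    have hsurj : Function.Surjective
        ⇑(((Submodule.comapSubtypeEquivOfLe hNker).toLinearMap).baseChange K) := by
      rw [show (⇑(((Submodule.comapSubtypeEquivOfLe hNker).toLinearMap).baseChange K) : _ → _) =
        ⇑(((Submodule.comapSubtypeEquivOfLe hNker).toLinearMap).lTensor K) from
        LinearMap.baseChange_eq_ltensor _]
      exact LinearMap.lTensor_surjective K (Submodule.comapSubtypeEquivOfLe hNker).surjective
    have r1 : Module.finrank K ↥(LinearMap.range (C.subtype.baseChange K)) =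
        Module.finrank K ↥(LinearMap.range (jker ∘ₗ (C.subtype.baseChange K))) := by
      rw [LinearMap.range_comp]
      exact LinearEquiv.finrank_eq (Submodule.equivMapOfInjective jker hjker_inj _)
    have r2 : LinearMap.range (jker ∘ₗ (C.subtype.baseChange K)) = LinearMap.range jN := by
      rw [hbc]
      exact LinearMap.range_comp_of_range_eq_top jN (LinearMap.range_eq_top.mpr hsurj)
    rw [r1, r2, LinearMap.finrank_range_of_inj hjN_inj]
  omega

end AbsAux

section Aux2

variable {F : Type*} [Field F] {V : Type*} [AddCommGroup V] [Module F V]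

lemma pi0_D_key (D : PolynomialModule F V →ₗ[Polynomial F] PolynomialModule F V)
    (q : PolynomialModule F V) :
    pi0 F V (D (PolynomialModule.lsingle F 0 (pi0 F V q))) = pi0 F V (D q) := by
  induction q using PolynomialModule.induction_linear with
  | zero => simp
  | add p q hp hq => simp only [map_add, hp, hq]
  | single a x =>
    rcases Nat.eq_zero_or_pos a with rfl | ha
    · congr 1
      rw [pi0_single_zero]
      rfl
    · have h1 : pi0 F V (PolynomialModule.single F a x) = 0 := by
        show (PolynomialModule.single F a x).coeff 0 = 0
        rw [PolynomialModule.coeff_single, Finsupp.single_apply, if_neg (by omega)]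
      rw [h1, map_zero, map_zero, map_zero]
      have h2 : PolynomialModule.single F a x =
          Polynomial.monomial a (1 : F) • PolynomialModule.single F 0 x := by
        rw [PolynomialModule.monomial_smul_single]; simp
      rw [h2]
      have h3 : D (Polynomial.monomial a (1 : F) • PolynomialModule.single F 0 x) =
          Polynomial.monomial a (1 : F) • D (PolynomialModule.single F 0 x) :=
        map_smul D _ _
      rw [h3, pi0_smul, Polynomial.coeff_monomial, if_neg (by omega), zero_smul]

end Aux2

set_option maxHeartbeats 2000000 in
set_option synthInstance.maxHeartbeats 400000 in
/-- For a finite-dimensional `F`-vector space `V` and an `F[X]`-linear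
`D : V[X] → V[X]` with `D ∘ D = 0`, the degree-zero part `d₀` of `D` satisfies
`d₀ ∘ d₀ = 0` and `dim_F (ker d₀ ⧸ im d₀) ≥ rank_{F[X]} (ker D ⧸ im D)`. -/
theorem finrank_homology_dZero_ge (F : Type*) [Field F] (V : Type*) [AddCommGroup V]
    [Module F V] [FiniteDimensional F V]
    (D : PolynomialModule F V →ₗ[Polynomial F] PolynomialModule F V)
    (hD : D ∘ₗ D = 0) :
    (dZero F V D) ∘ₗ (dZero F V D) = 0 ∧
      Module.finrank (FractionRing (Polynomial F))
          (FractionRing (Polynomial F) ⊗[Polynomial F] LinHomology D) ≤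
        Module.finrank F (LinHomology (dZero F V D)) := by
  classical
  have hDD : ∀ p, D (D p) = 0 := by
    intro p
    have := LinearMap.ext_iff.mp hD p
    simpa using this
  have hdZ : ∀ x, dZero F V D x = pi0 F V (D (PolynomialModule.lsingle F 0 x)) := fun _ => rfl
  have hd0 : (dZero F V D) ∘ₗ (dZero F V D) = 0 := by
    ext x
    show dZero F V D (dZero F V D x) = 0
    rw [hdZ x, hdZ, pi0_D_key D (D (PolynomialModule.lsingle F 0 x)), hDD, map_zero]
  refine ⟨hd0, ?_⟩
  -- Basis of V and of V[X]
  let b : Module.Basis (Fin (Module.finrank F V)) F V := Module.finBasis F V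
  let bM : Module.Basis (Fin (Module.finrank F V)) (Polynomial F) (PolynomialModule F V) := polyBasis b
  haveI : Module.Finite (Polynomial F) (PolynomialModule F V) := Module.Finite.of_basis bM
  haveI : IsNoetherian (Polynomial F) (PolynomialModule F V) :=
    isNoetherian_of_isNoetherianRing_of_finite (Polynomial F) (PolynomialModule F V)
  haveI : Module.Finite (Polynomial F) ↥(LinearMap.ker D) :=
    Module.Finite.iff_fg.mpr (IsNoetherian.noetherian _)
  obtain ⟨m, bN⟩ := Submodule.basisOfPid bM (LinearMap.range D)
  haveI : Module.Finite (Polynomial F) ↥(LinearMap.range D) := Module.Finite.of_basis bN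
  have h_n : Module.finrank (FractionRing (Polynomial F)) ((FractionRing (Polynomial F)) ⊗[Polynomial F] PolynomialModule F V) =
      Module.finrank F V := by
    rw [Module.finrank_eq_card_basis (Algebra.TensorProduct.basis (FractionRing (Polynomial F)) bM)]
    simp
  have h_KN : Module.finrank (FractionRing (Polynomial F)) ((FractionRing (Polynomial F)) ⊗[Polynomial F] ↥(LinearMap.range D)) = m := by
    rw [Module.finrank_eq_card_basis (Algebra.TensorProduct.basis (FractionRing (Polynomial F)) bN)]
    simp
  have habs := LinHomology.finrank_baseChange_le (K := (FractionRing (Polynomial F))) D hDD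
  rw [h_KN, h_n] at habs
  -- F-side dimensions
  have hd0d0 : ∀ x, dZero F V D (dZero F V D x) = 0 := by
    intro x
    have := LinearMap.ext_iff.mp hd0 x
    simpa using this
  have hrange0 : LinearMap.range (dZero F V D) ≤ LinearMap.ker (dZero F V D) := by
    rintro _ ⟨x, rfl⟩
    exact hd0d0 x
  have f1 : Module.finrank F (LinHomology (dZero F V D)) +
      Module.finrank F ↥((LinearMap.range (dZero F V D)).comap
        (LinearMap.ker (dZero F V D)).subtype) =
      Module.finrank F ↥(LinearMap.ker (dZero F V D)) :=
    Submodule.finrank_quotient_add_finrank _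
  have f2 : Module.finrank F ↥((LinearMap.range (dZero F V D)).comap
      (LinearMap.ker (dZero F V D)).subtype) =
      Module.finrank F ↥(LinearMap.range (dZero F V D)) :=
    LinearEquiv.finrank_eq (Submodule.comapSubtypeEquivOfLe hrange0)
  have f3 : Module.finrank F ↥(LinearMap.range (dZero F V D)) +
      Module.finrank F ↥(LinearMap.ker (dZero F V D)) = Module.finrank F V :=
    LinearMap.finrank_range_add_finrank_ker (dZero F V D)
  -- the rank of d₀ is at most m
  have key : ∀ z : ↥(LinearMap.range D), pi0 F V (z : PolynomialModule F V) ∈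
      Submodule.span F (Set.range fun i => pi0 F V ((bN i : PolynomialModule F V))) := by
    intro z
    have hz : z ∈ Submodule.span (Polynomial F) (Set.range bN) := by
      rw [bN.span_eq]; trivial
    induction hz using Submodule.span_induction with
    | mem y hy =>
      obtain ⟨i, rfl⟩ := hy
      exact Submodule.subset_span ⟨i, rfl⟩
    | zero => rw [Submodule.coe_zero, map_zero]; exact Submodule.zero_mem _
    | add y w _ _ hy hw => rw [Submodule.coe_add, map_add]; exact Submodule.add_mem _ hy hw
    | smul f y _ hy =>
      rw [Submodule.coe_smul, pi0_smul]
      exact Submodule.smul_mem _ _ hy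
  have hr0 : Module.finrank F ↥(LinearMap.range (dZero F V D)) ≤ m := by
    have hsub : LinearMap.range (dZero F V D) ≤
        Submodule.span F (Set.range fun i => pi0 F V ((bN i : PolynomialModule F V))) := by
      rintro _ ⟨x, rfl⟩
      rw [hdZ x]
      exact key ⟨D (PolynomialModule.lsingle F 0 x), LinearMap.mem_range_self D _⟩
    refine le_trans (Submodule.finrank_mono hsub) ?_
    refine le_trans (finrank_span_le_card _) ?_
    rw [Set.toFinset_range]
    exact le_trans (Finset.card_image_le) (by simp)
  omega
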